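/- Let f : A → B be a homomorphism of algebras of the same type and a⃗, b⃗ ∈ A^k. Then the commutative square formed by the canonical quotient maps ν : A → A/Cg^A(a⃗,b⃗), μ : B → B/Cg^B(f(a⃗),f(b⃗)), the map f, and the induced homomorphism ψ : A/Cg^A(a⃗,b⃗) → B/Cg^B(f(a⃗),f(b⃗)) is a pushout square in the category of algebras of that type. -/

import Mathlib

/-- A similarity type (signature) of algebras. -/
structure Sgn where
  ops : Type
  arity : ops → ℕ

/-- An algebra of signature `σ` on carrier `A`. -/
class MAlg (σ : Sgn) (A : Type) where
  app : ∀ o : σ.ops, (Fin (σ.arity o) → A) → A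

/-- Homomorphisms of `σ`-algebras. -/
structure MHom (σ : Sgn) (A B : Type) [MAlg σ A] [MAlg σ B] where
  toFun : A → B
  map_app : ∀ (o : σ.ops) (x : Fin (σ.arity o) → A),
    toFun (MAlg.app o x) = MAlg.app o (fun i => toFun (x i))

/-- `r` is a congruence of the `σ`-algebra `A`. -/
def IsCong (σ : Sgn) (A : Type) [MAlg σ A] (r : A → A → Prop) : Prop :=
  Equivalence r ∧ ∀ (o : σ.ops) (x y : Fin (σ.arity o) → A),
    (∀ i, r (x i) (y i)) → r (MAlg.app o x) (MAlg.app o y)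

/-- The congruence of `A` generated by a set `S` of pairs. -/
def cgen (σ : Sgn) (A : Type) [MAlg σ A] (S : Set (A × A)) : A → A → Prop :=
  fun a b => ∀ r : A → A → Prop, IsCong σ A r → (∀ p ∈ S, r p.1 p.2) → r a b

/-- The congruence generated by the pairs `(a i, b i)`. -/
def cgenP (σ : Sgn) (A : Type) [MAlg σ A] {k : ℕ} (a b : Fin k → A) : A → A → Prop :=
  cgen σ A {p | ∃ i, p = (a i, b i)}

attribute [reducible] cgenP

theorem cgen_isCong (σ : Sgn) (A : Type) [MAlg σ A] (S : Set (A × A)) :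
    IsCong σ A (cgen σ A S) := by
  constructor
  · constructor
    · intro a r hr _; exact hr.1.refl a
    · intro a b h r hr hS; exact hr.1.symm (h r hr hS)
    · intro a b c h1 h2 r hr hS; exact hr.1.trans (h1 r hr hS) (h2 r hr hS)
  · intro o x y h r hr hS
    exact hr.2 o x y (fun i => h i r hr hS)

/-- The setoid attached to a congruence. -/
def conStd {σ : Sgn} {A : Type} [MAlg σ A] (r : A → A → Prop) (h : IsCong σ A r) :
    Setoid A := ⟨r, h.1⟩

/-- The quotient of an algebra by a congruence. -/
abbrev QuotC {σ : Sgn} {A : Type} [MAlg σ A] (r : A → A → Prop) (h : IsCong σ A r) : Type :=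
  Quotient (conStd r h)

noncomputable instance {σ : Sgn} {A : Type} [MAlg σ A] {r : A → A → Prop} {h : IsCong σ A r} :
    MAlg σ (QuotC r h) :=
  ⟨fun o x => Quotient.mk (conStd r h) (MAlg.app o (fun i => (x i).out))⟩

/-- The canonical quotient homomorphism. -/
noncomputable def qmap {σ : Sgn} {A : Type} [MAlg σ A] (r : A → A → Prop) (h : IsCong σ A r) :
    MHom σ A (QuotC r h) where
  toFun a := Quotient.mk (conStd r h) a
  map_app o x := by
    apply Quotient.sound
    exact h.2 o x (fun i => (Quotient.mk (conStd r h) (x i)).out)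
      (fun i => (conStd r h).symm (Quotient.mk_out (s := conStd r h) (x i)))

/-- The product algebra. -/
instance {σ : Sgn} {A B : Type} [MAlg σ A] [MAlg σ B] : MAlg σ (A × B) :=
  ⟨fun o x => (MAlg.app o (fun i => (x i).1), MAlg.app o (fun i => (x i).2))⟩

/-- Composition of homomorphisms. -/
def MHom.comp {σ : Sgn} {A B C : Type} [MAlg σ A] [MAlg σ B] [MAlg σ C]
    (g : MHom σ B C) (f : MHom σ A B) : MHom σ A C where
  toFun := g.toFun ∘ f.toFun
  map_app o x := by simp [Function.comp, f.map_app, g.map_app]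

/-- the square formed by the canonical quotient maps
`ν : A → A/Cg(a⃗,b⃗)`, `μ : B → B/Cg(f a⃗, f b⃗)`, `f` and the induced homomorphism `ψ`
is a pushout in the category of `σ`-algebras. -/
theorem stmt3 (σ : Sgn) (A B : Type) [MAlg σ A] [MAlg σ B]
    (f : MHom σ A B) (k : ℕ) (a b : Fin k → A)
    (ψ : MHom σ (QuotC (cgenP σ A a b) (cgen_isCong σ A _))
          (QuotC (cgenP σ B (fun i => f.toFun (a i)) (fun i => f.toFun (b i)))
            (cgen_isCong σ B _)))
    (hψ : ∀ x : A,
      ψ.toFun ((qmap (cgenP σ A a b) (cgen_isCong σ A _)).toFun x) =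
        (qmap (cgenP σ B (fun i => f.toFun (a i)) (fun i => f.toFun (b i)))
          (cgen_isCong σ B _)).toFun (f.toFun x)) :
    ∀ (D : Type) (iD : MAlg σ D)
      (u : @MHom σ (QuotC (cgenP σ A a b) (cgen_isCong σ A _)) D _ iD)
      (v : @MHom σ B D _ iD),
      (∀ x : A, u.toFun ((qmap (cgenP σ A a b) (cgen_isCong σ A _)).toFun x) =
          v.toFun (f.toFun x)) →
      ∃! w : @MHom σ (QuotC (cgenP σ B (fun i => f.toFun (a i)) (fun i => f.toFun (b i)))
            (cgen_isCong σ B _)) D _ iD,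
        (∀ q, w.toFun (ψ.toFun q) = u.toFun q) ∧
        (∀ x : B, w.toFun ((qmap (cgenP σ B (fun i => f.toFun (a i)) (fun i => f.toFun (b i)))
            (cgen_isCong σ B _)).toFun x) = v.toFun x) := by
  intro D iD u v huv
  have hker : IsCong σ B (fun x y => v.toFun x = v.toFun y) := by
    refine ⟨⟨fun _ => rfl, fun h => h.symm, fun h1 h2 => h1.trans h2⟩, ?_⟩
    intro o x y h
    rw [v.map_app, v.map_app]
    exact congrArg _ (funext h)
  have hgen : ∀ p ∈ {p : B × B | ∃ i, p = (f.toFun (a i), f.toFun (b i))},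
      v.toFun p.1 = v.toFun p.2 := by
    rintro p ⟨i, rfl⟩
    show v.toFun (f.toFun (a i)) = v.toFun (f.toFun (b i))
    rw [← huv, ← huv]
    congr 1
    apply Quotient.sound
    intro r hr hS
    exact hS _ ⟨i, rfl⟩
  have hresp : ∀ x y, cgenP σ B (fun i => f.toFun (a i)) (fun i => f.toFun (b i)) x y →
      v.toFun x = v.toFun y := fun x y h => h _ hker hgen
  refine ⟨⟨Quotient.lift v.toFun hresp, ?_⟩, ⟨?_, fun x => rfl⟩, ?_⟩
  · intro o x
    show v.toFun (MAlg.app o fun i => (x i).out) = _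
    rw [v.map_app]
    congr 1
    funext i
    conv_rhs => rw [← Quotient.out_eq (x i)]
    rfl
  · intro q
    induction q using Quotient.ind with
    | _ x =>
      have h1 := hψ x
      have h2 : (⟦x⟧ : QuotC (cgenP σ A a b) (cgen_isCong σ A _)) =
          (qmap (cgenP σ A a b) (cgen_isCong σ A _)).toFun x := rfl
      show Quotient.lift v.toFun hresp (ψ.toFun _) = _
      rw [h2, h1]
      exact (huv x).symm
  · intro w ⟨hw1, hw2⟩
    have : w.toFun = Quotient.lift v.toFun hresp := by
      funext q
      induction q using Quotient.ind with
      | _ x => exact hw2 x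
    cases w
    simp_all
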